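/- arXiv:2209.10443 — 3 statements merged into one kernel-verified Lean document; each statement's English description precedes it below -/
import Mathlib

section
/- For every natural number Δ, the identity Σ_{n=0}^{Δ} Σ_{k≥0} binom(Δ,n)·binom(n−1,k)·(−1)^{n+k}·x^k·(1−x)^{n−1−k}·y^k = x^Δ·(1+y)^Δ·(1−x−xy)^{−1} holds in ℚ[[x,y]]; equivalently, for every k ∈ ℕ, the finite sum Σ_{n=0}^{Δ} binom(Δ,n)·binom(n−1,k)·(−1)^{n+k}·x^k·(1−x)^{n−1−k} (an element of ℚ[[x]]) equals the coefficient of y^k in x^Δ·(1+y)^Δ·(1−x−xy)^{−1}. -/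
/-- The generalized binomial coefficient `binom n k = n(n-1)⋯(n-k+1)/k!`
for `n : ℤ` and `k : ℕ`. -/
def binom (n : ℤ) (k : ℕ) : ℚ :=
  (∏ i ∈ Finset.range k, ((n : ℚ) - (i : ℚ))) / (k.factorial : ℚ)

/-- We regard `ℚ[[x,y]]` as `(ℚ[[x]])[[y]]`: `x` is `PowerSeries.X : ℚ[[x]]`
(embedded by the constant map `C`) and `y` is `PowerSeries.X : (ℚ[[x]])[[y]]`. -/
noncomputable abbrev Qx : Type := PowerSeries ℚ

open PowerSeries

lemma binom_zero_right (n : ℤ) : binom n 0 = 1 := by simp [binom]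

lemma binom_succ (n : ℤ) (k : ℕ) : binom (n + 1) (k + 1) = binom n (k + 1) + binom n k := by
  have hk : (Nat.factorial k : ℚ) ≠ 0 := by exact_mod_cast k.factorial_ne_zero
  have hk1 : ((k:ℚ) + 1) ≠ 0 := by positivity
  have h1 : ∏ i ∈ Finset.range (k+1), (((n:ℤ):ℚ) + 1 - (i:ℚ))
      = ((n:ℚ) + 1) * ∏ i ∈ Finset.range k, ((n:ℚ) - (i:ℚ)) := by
    rw [Finset.prod_range_succ']
    push_cast
    ring_nf
  have h2 : ∏ i ∈ Finset.range (k+1), ((n:ℚ) - (i:ℚ))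
      = (∏ i ∈ Finset.range k, ((n:ℚ) - (i:ℚ))) * ((n:ℚ) - (k:ℚ)) := Finset.prod_range_succ _ _
  unfold binom
  rw [Nat.factorial_succ]
  push_cast at h1 ⊢
  rw [h1, h2]
  field_simp
  ring

lemma binom_natCast (n k : ℕ) : binom (n : ℤ) k = (n.choose k : ℚ) := by
  induction n generalizing k with
  | zero =>
    cases k with
    | zero => simp [binom]
    | succ k =>
      simp only [binom, Finset.prod_range_succ']
      simp
  | succ n ih =>
    cases k with
    | zero => simp [binom_zero_right]
    | succ k =>
      have : ((n:ℤ) + 1) = ((n+1 : ℕ) : ℤ) := by push_cast; ring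
      rw [← this, binom_succ, ih, ih, Nat.choose_succ_succ]
      push_cast
      ring

noncomputable def Fser (a : Qx) (m : ℤ) : PowerSeries Qx :=
  PowerSeries.mk (fun k => PowerSeries.C (R := ℚ) (binom m k) * (-a) ^ k)

lemma Fser_mul (a : Qx) (u : (PowerSeries Qx)ˣ)
    (hu : (u : PowerSeries Qx) = 1 - PowerSeries.C (R := Qx) a * X) (m : ℤ) :
    Fser a m * (u : PowerSeries Qx) = Fser a (m + 1) := by
  rw [hu]
  ext k
  have : Fser a m * (1 - PowerSeries.C (R := Qx) a * X)
      = Fser a m - PowerSeries.C (R := Qx) a * (X * Fser a m) := by ring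
  rw [this, map_sub]
  cases k with
  | zero =>
    rw [coeff_C_mul, coeff_zero_X_mul]
    simp [Fser, binom_zero_right]
  | succ k =>
    rw [coeff_C_mul, coeff_succ_X_mul]
    simp only [Fser, coeff_mk]
    rw [show m + 1 = (m + 1) from rfl, binom_succ, map_add]
    ring

lemma Fser_eq (a : Qx) (u : (PowerSeries Qx)ˣ)
    (hu : (u : PowerSeries Qx) = 1 - PowerSeries.C (R := Qx) a * X) (m : ℤ) :
    ((u ^ m : (PowerSeries Qx)ˣ) : PowerSeries Qx) = Fser a m := by
  have hF0 : Fser a 0 = 1 := by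
    ext k
    cases k with
    | zero => simp [Fser, binom_zero_right]
    | succ k =>
      have h0 : binom (0:ℤ) (k+1) = 0 := by
        have := binom_natCast 0 (k+1); simpa using this
      simp [Fser, h0]
  induction m using Int.induction_on with
  | zero => simp [hF0]
  | succ i ih =>
    rw [zpow_add_one, Units.val_mul, ih, Fser_mul a u hu]
  | pred i ih =>
    have h1 : Fser a (-(i:ℤ) - 1) * (u : PowerSeries Qx) = Fser a (-(i:ℤ)) := by
      have := Fser_mul a u hu (-(i:ℤ) - 1)
      rwa [sub_add_cancel] at this
    have h2 : ((u ^ (-(i:ℤ) - 1) : (PowerSeries Qx)ˣ) : PowerSeries Qx) * (u : PowerSeries Qx)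
        = Fser a (-(i:ℤ)) := by
      rw [← ih, ← Units.val_mul, ← zpow_add_one, sub_add_cancel]
    have h3 := h1.trans h2.symm
    have h4 := congrArg (fun z => z * ((u⁻¹ : (PowerSeries Qx)ˣ) : PowerSeries Qx)) h3
    simpa only [Units.mul_inv_cancel_right] using h4.symm

lemma coeff_W_pow (V : Qxˣ) (hV : (V : Qx) = 1 - X) (W : (PowerSeries Qx)ˣ)
    (hW : (W : PowerSeries Qx) = 1 - PowerSeries.C (R := Qx) X - PowerSeries.C (R := Qx) X * X)
    (m : ℤ) (k : ℕ) :
    PowerSeries.coeff (R := Qx) k ((W ^ m : (PowerSeries Qx)ˣ) : PowerSeries Qx)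
      = PowerSeries.C (R := ℚ) (binom m k) * (-1 : Qx) ^ k * X ^ k
        * ((V ^ (m - (k:ℤ)) : Qxˣ) : Qx) := by
  set f : Qx →* PowerSeries Qx := (PowerSeries.C (R := Qx)).toMonoidHom with hf
  set VC : (PowerSeries Qx)ˣ := Units.map f V with hVC
  set a : Qx := ((V⁻¹ : Qxˣ) : Qx) * X with ha
  set u : (PowerSeries Qx)ˣ := VC⁻¹ * W with huu
  have hVCval : (VC : PowerSeries Qx) = PowerSeries.C (R := Qx) (V : Qx) := rfl
  have hVCinv : ((VC⁻¹ : (PowerSeries Qx)ˣ) : PowerSeries Qx)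
      = PowerSeries.C (R := Qx) ((V⁻¹ : Qxˣ) : Qx) := by
    rw [← map_inv]; rfl
  have hinvV : ((V⁻¹ : Qxˣ) : Qx) * (1 - X) = 1 := by rw [← hV]; exact Units.inv_mul V
  have hu : (u : PowerSeries Qx) = 1 - PowerSeries.C (R := Qx) a * X := by
    rw [huu, Units.val_mul, hVCinv, hW, ha]
    rw [show (1 : PowerSeries Qx) - PowerSeries.C (R := Qx) X - PowerSeries.C (R := Qx) X * X
        = PowerSeries.C (R := Qx) (1 - X) - PowerSeries.C (R := Qx) X * X by rw [map_sub, map_one]]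
    rw [mul_sub, ← map_mul, hinvV, map_one, map_mul]
    ring
  have hWu : W = VC * u := by rw [huu, mul_inv_cancel_left]
  have hsplit : ((W ^ m : (PowerSeries Qx)ˣ) : PowerSeries Qx)
      = PowerSeries.C (R := Qx) ((V ^ m : Qxˣ) : Qx) * ((u ^ m : (PowerSeries Qx)ˣ) : PowerSeries Qx) := by
    rw [hWu, mul_zpow, Units.val_mul, hVC, ← map_zpow]
    rfl
  rw [hsplit, coeff_C_mul, Fser_eq a u hu m]
  simp only [Fser, coeff_mk]
  have hna : (-a) ^ k = (-1 : Qx) ^ k * ((V⁻¹ ^ k : Qxˣ) : Qx) * X ^ k := by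
    rw [ha, neg_pow, mul_pow, ← Units.val_pow_eq_pow_val]
    ring
  rw [hna]
  have hV2 : ((V ^ m : Qxˣ) : Qx) * ((V⁻¹ ^ k : Qxˣ) : Qx) = ((V ^ (m - (k:ℤ)) : Qxˣ) : Qx) := by
    rw [← Units.val_mul]
    congr 1
    rw [inv_pow, ← zpow_natCast V k, ← zpow_neg, ← zpow_add, sub_eq_add_neg]
  rw [← hV2]
  ring



/-- For every natural number `Δ` and every `k : ℕ`, the finite sum
`Σ_{n=0}^{Δ} binom(Δ,n)·binom(n−1,k)·(−1)^{n+k}·x^k·(1−x)^{n−1−k}` (an element of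
`ℚ[[x]]`) equals the coefficient of `y^k` in `x^Δ·(1+y)^Δ·(1−x−xy)^{−1}`;
here `V` is the unit `1−x` of `ℚ[[x]]`, `W` is the unit `1−x−xy` of
`(ℚ[[x]])[[y]]`, and negative integer powers are taken in the groups of units. -/
theorem stmt_6 (Δ : ℕ) (V : Qxˣ) (hV : (V : Qx) = 1 - PowerSeries.X)
    (W : (PowerSeries Qx)ˣ)
    (hW : (W : PowerSeries Qx) =
      1 - PowerSeries.C (R := Qx) PowerSeries.X -
        PowerSeries.C (R := Qx) PowerSeries.X * PowerSeries.X)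
    (k : ℕ) :
    PowerSeries.coeff (R := Qx) k
        (PowerSeries.C (R := Qx) (PowerSeries.X ^ Δ) * (1 + PowerSeries.X) ^ Δ *
          ((W ^ (-1 : ℤ) : (PowerSeries Qx)ˣ) : PowerSeries Qx)) =
      ∑ n ∈ Finset.range (Δ + 1),
        PowerSeries.C (R := ℚ) (binom (Δ : ℤ) n * binom ((n : ℤ) - 1) k * (-1) ^ (n + k)) *
          PowerSeries.X ^ k *
          ((V ^ ((n : ℤ) - 1 - (k : ℤ)) : Qxˣ) : Qx) := by
  have key : PowerSeries.C (R := Qx) (X ^ Δ) * (1 + X) ^ Δ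
        * ((W ^ (-1:ℤ) : (PowerSeries Qx)ˣ) : PowerSeries Qx)
      = ∑ n ∈ Finset.range (Δ+1),
          PowerSeries.C (R := Qx) (PowerSeries.C (R := ℚ) ((Δ.choose n : ℚ) * (-1)^n))
            * ((W ^ ((n:ℤ)-1) : (PowerSeries Qx)ˣ) : PowerSeries Qx) := by
    have hmul : ∀ f g : PowerSeries Qx,
        f * (W : PowerSeries Qx) = g * (W : PowerSeries Qx) → f = g := by
      intro f g h
      have := congrArg (fun z => z * ((W⁻¹ : (PowerSeries Qx)ˣ) : PowerSeries Qx)) h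
      simpa only [Units.mul_inv_cancel_right] using this
    apply hmul
    have h1 : ((W ^ (-1:ℤ) : (PowerSeries Qx)ˣ) : PowerSeries Qx) * (W : PowerSeries Qx) = 1 := by
      rw [← Units.val_mul, zpow_neg_one, inv_mul_cancel]
      rfl
    have h2 : ∀ n : ℕ, ((W ^ ((n:ℤ)-1) : (PowerSeries Qx)ˣ) : PowerSeries Qx)
        * (W : PowerSeries Qx) = (W : PowerSeries Qx) ^ n := by
      intro n
      rw [← Units.val_mul, ← zpow_add_one, sub_add_cancel, zpow_natCast,
        Units.val_pow_eq_pow_val]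
    rw [mul_assoc, h1, mul_one, Finset.sum_mul]
    simp_rw [mul_assoc, h2]
    have hW1 : PowerSeries.C (R := Qx) X * (1 + X) = 1 - (W : PowerSeries Qx) := by
      rw [hW]; ring
    calc PowerSeries.C (R := Qx) (X ^ Δ) * (1 + X) ^ Δ
        = (PowerSeries.C (R := Qx) X * (1 + X)) ^ Δ := by rw [map_pow, mul_pow]
      _ = ((- (W : PowerSeries Qx)) + 1) ^ Δ := by rw [hW1]; ring_nf
      _ = ∑ n ∈ Finset.range (Δ+1),
            (-(W : PowerSeries Qx)) ^ n * 1 ^ (Δ - n) * (Δ.choose n : PowerSeries Qx) :=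
          add_pow _ _ _
      _ = _ := by
          refine Finset.sum_congr rfl fun n _ => ?_
          rw [neg_pow, one_pow]
          simp only [map_mul, map_pow, map_neg, map_one, map_natCast]
          ring
  rw [key, map_sum]
  refine Finset.sum_congr rfl fun n _ => ?_
  rw [coeff_C_mul, coeff_W_pow V hV W hW ((n:ℤ)-1) k]
  rw [show binom (Δ:ℤ) n * binom ((n:ℤ)-1) k * (-1:ℚ)^(n+k)
      = ((Δ.choose n : ℚ) * (-1)^n) * (binom ((n:ℤ)-1) k * (-1)^k) by
    rw [pow_add, binom_natCast]; ring]
  simp only [map_mul, map_pow, map_neg, map_one]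
  ring
end

section
/- Let r ≥ 3, A ∈ 𝒯_r and e ∈ E(A). Then for every point z ∈ X_r and every function f : ℂ^r → ℂ that is complex-differentiable at z, one has Σ_{l ∈ Leaf(e)} (z_l − z_{R(d(e))}) · ∂f/∂z_l (z) = ζ_e(z) · ∂(f ∘ Φ_A)/∂ζ_e (Ψ_A(z)), where ∂/∂ζ_e denotes the partial derivative in the ζ_e-slot of the A-coordinates; that is, the differential operator ζ_e d/dζ_e in A-coordinates equals Σ_{l ∈ Leaf(e)} (z_l − z_{R(d(e))}) ∂_l on X_r. -/
noncomputable section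

/-- A plane (rooted) binary tree with leaves labeled by elements of `Fin r`. -/
inductive PTree (r : ℕ) : Type
  | leaf : Fin r → PTree r
  | node : PTree r → PTree r → PTree r

namespace PTree

variable {r : ℕ}

/-- The labels of the leaves of the tree, listed from left to right. -/
def leafLabels : PTree r → List (Fin r)
  | .leaf i => [i]
  | .node l t => l.leafLabels ++ t.leafLabels

/-- `A ∈ 𝒯_r`: the `r` leaves of `A` are labeled bijectively by `Fin r`. -/
def IsTree (A : PTree r) : Prop :=
  A.leafLabels.Nodup ∧ A.leafLabels.length = r

/-- The label of the rightmost leaf of the tree. -/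
def rightmost : PTree r → Fin r
  | .leaf i => i
  | .node _ t => t.rightmost

/-- The subtree of a tree at the address `p` (`false` = go to the left child,
`true` = go to the right child), if the address is valid. -/
def subtreeAt : PTree r → List Bool → Option (PTree r)
  | t, [] => some t
  | .leaf _, _ :: _ => none
  | .node l t, b :: p => (if b then t else l).subtreeAt p

/-- `p` is the address of an internal (non-leaf) vertex of `A`; the set of such
addresses is `V(A)`. -/
def IsVertex (A : PTree r) (p : List Bool) : Prop :=
  ∃ l t : PTree r, A.subtreeAt p = some (.node l t)

/-- `p` is the address of the lower endpoint `d(e)` of an internal edge `e` of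
`A` (an edge not adjacent to a leaf); the upper endpoint `u(e)` is at the
address `p.dropLast`.  The set of such addresses is `E(A)`. -/
def IsEdge (A : PTree r) (p : List Bool) : Prop :=
  p ≠ [] ∧ A.IsVertex p

/-- The type `E(A)` of internal edges of `A`. -/
abbrev Edge (A : PTree r) : Type := {p : List Bool // A.IsEdge p}

/-- `x_v = z_{L(v)} − z_{R(v)}` for the internal vertex `v` given as the
subtree rooted at it (junk value `0` at leaves). -/
def xval (z : Fin r → ℂ) : PTree r → ℂ
  | .leaf _ => 0
  | .node l t => z l.rightmost - z t.rightmost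

/-- The coordinate `x_v` for the vertex `v` of `A` with address `p`. -/
def xAt (A : PTree r) (z : Fin r → ℂ) (p : List Bool) : ℂ :=
  match A.subtreeAt p with
  | some t => xval z t
  | none => 0

/-- The coordinate `ζ_e = x_{d(e)} / x_{u(e)}` for the edge of `A` whose lower
endpoint has address `p` (its upper endpoint has address `p.dropLast`). -/
def zetaAt (A : PTree r) (z : Fin r → ℂ) (p : List Bool) : ℂ :=
  xAt A z p / xAt A z p.dropLast

/-- `Leaf(e)`: the labels of the leaves descending from the vertex of `A` with
address `p`. -/
def leavesAt (A : PTree r) (p : List Bool) : List (Fin r) :=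
  ((A.subtreeAt p).map leafLabels).getD []

/-- The label of the rightmost leaf descending from the vertex of `A` with
address `p`. -/
def rightmostAt (A : PTree r) (p : List Bool) : Option (Fin r) :=
  (A.subtreeAt p).map rightmost

end PTree

/-- The configuration space `X_r = {(z_1,…,z_r) ∈ ℂ^r : z_i ≠ z_j for i ≠ j}`. -/
def ConfigSpace (r : ℕ) : Set (Fin r → ℂ) :=
  {z | ∀ i j : Fin r, i ≠ j → z i ≠ z j}

namespace PTree

variable {r : ℕ}

/-- The `A`-coordinate map `Ψ_A = (z_A, x_A, (ζ_e)_{e ∈ E(A)})`, where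
`z_A = z_{r_A}` (`r_A` the rightmost leaf of `A`) and `x_A = x_{t_A}` (`t_A`
the root of `A`). -/
def psi (A : PTree r) (z : Fin r → ℂ) : ℂ × ℂ × (A.Edge → ℂ) :=
  (z A.rightmost, xval z A, fun e => A.zetaAt z e.1)

/-- The variable index type for the polynomial ring
`ℂ[z_A, x_A, ζ_e (e ∈ E(A))]`. -/
abbrev Idx (A : PTree r) : Type := Unit ⊕ Unit ⊕ A.Edge

/-- The point of `ℂ^{Idx A}` corresponding to `w = (z_A, x_A, (ζ_e)_e)`. -/
def assign (A : PTree r) (w : ℂ × ℂ × (A.Edge → ℂ)) : A.Idx → ℂ :=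
  Sum.elim (fun _ => w.1) (Sum.elim (fun _ => w.2.1) fun e => w.2.2 e)

/-- The polynomial map `Φ_A : ℂ × ℂ × ℂ^{E(A)} → ℂ^r` determined by a family
of polynomials `P`. -/
def phiMap (A : PTree r) (P : Fin r → MvPolynomial A.Idx ℂ)
    (w : ℂ × ℂ × (A.Edge → ℂ)) : Fin r → ℂ :=
  fun i => MvPolynomial.eval (A.assign w) (P i)

/-- `Φ_A ∘ Ψ_A = id` on `X_r`. -/
def PhiPsiId (A : PTree r) (P : Fin r → MvPolynomial A.Idx ℂ) : Prop :=
  ∀ z ∈ ConfigSpace r, A.phiMap P (A.psi z) = z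

/-- `Ψ_A ∘ Φ_A = id` on `ℂ × ℂ^× × (ℂ^×)^{E(A)}`. -/
def PsiPhiId (A : PTree r) (P : Fin r → MvPolynomial A.Idx ℂ) : Prop :=
  ∀ w : ℂ × ℂ × (A.Edge → ℂ), w.2.1 ≠ 0 → (∀ e, w.2.2 e ≠ 0) →
    A.psi (A.phiMap P w) = w

end PTree



namespace PTree

variable {r : ℕ}

lemma rightmost_mem_leafLabels : ∀ T : PTree r, T.rightmost ∈ T.leafLabels
  | .leaf i => by simp [rightmost, leafLabels]
  | .node l t => by
      simp only [rightmost, leafLabels, List.mem_append]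
      exact Or.inr (rightmost_mem_leafLabels t)

lemma subtreeAt_append : ∀ (p q : List Bool) (A : PTree r),
    A.subtreeAt (p ++ q) = (A.subtreeAt p).bind (fun T => T.subtreeAt q)
  | [], q, A => by simp [subtreeAt]
  | b :: p, q, .leaf i => by simp [subtreeAt]
  | b :: p, q, .node L R => by
      simp only [List.cons_append, subtreeAt]
      exact subtreeAt_append p q _

lemma leafLabels_infix : ∀ (p : List Bool) (A B : PTree r),
    A.subtreeAt p = some B → B.leafLabels <:+: A.leafLabels
  | [], A, B => by
      intro h
      simp only [subtreeAt, Option.some.injEq] at h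
      exact h ▸ List.infix_rfl
  | b :: p, .leaf i, B => by simp [subtreeAt]
  | b :: p, .node L R, B => by
      intro h
      simp only [subtreeAt] at h
      cases b with
      | false =>
          simp only [if_neg Bool.false_ne_true] at h
          refine (leafLabels_infix p L B (by simpa using h)).trans ?_
          exact ⟨[], R.leafLabels, by simp [leafLabels]⟩
      | true =>
          refine (leafLabels_infix p R B (by simpa using h)).trans ?_
          exact ⟨L.leafLabels, [], by simp [leafLabels]⟩

lemma nodup_of_subtree {p : List Bool} {A B : PTree r} (hN : A.leafLabels.Nodup)
    (h : A.subtreeAt p = some B) : B.leafLabels.Nodup :=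
  ((leafLabels_infix p A B h).sublist).nodup hN

lemma subset_of_subtree {p : List Bool} {A B : PTree r}
    (h : A.subtreeAt p = some B) : B.leafLabels ⊆ A.leafLabels :=
  ((leafLabels_infix p A B h).sublist).subset

/-- chain lemma: if the rightmost leaf of `T` lies in a subtree `B` of `T`,
it is the rightmost leaf of `B`. -/
lemma rightmost_chain : ∀ (s : List Bool) (T B : PTree r),
    T.leafLabels.Nodup → T.subtreeAt s = some B →
    T.rightmost ∈ B.leafLabels → T.rightmost = B.rightmost
  | [], T, B => by
      intro _ h _
      simp only [subtreeAt, Option.some.injEq] at h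
      rw [h]
  | b :: s, .leaf i, B => by simp [subtreeAt]
  | b :: s, .node L R, B => by
      intro hN h hm
      simp only [subtreeAt] at h
      have hN' : (L.leafLabels ++ R.leafLabels).Nodup := hN
      rw [List.nodup_append] at hN'
      cases b with
      | true =>
          simp only [if_pos rfl] at h
          exact rightmost_chain s R B hN'.2.1 h hm
      | false =>
          simp only [Bool.false_eq_true, if_neg Bool.false_ne_true] at h
          exfalso
          have h1 : (node L R).rightmost ∈ R.leafLabels :=
            rightmost_mem_leafLabels R
          have h2 : (node L R).rightmost ∈ L.leafLabels :=
            subset_of_subtree h hm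
          exact hN'.2.2 _ h2 _ h1 rfl

/-- if `q` is not below `e₀`, the rightmost leaf of the subtree at `q`
can only lie in the subtree `B` at `e₀` if it is the rightmost leaf of `B`. -/
lemma rightmost_fixed : ∀ (e₀ q : List Bool) (A B T : PTree r),
    A.leafLabels.Nodup → A.subtreeAt e₀ = some B → A.subtreeAt q = some T →
    ¬ (e₀ <+: q) → T.rightmost ∈ B.leafLabels → T.rightmost = B.rightmost
  | [], q, A, B, T => by
      intro _ _ _ hpre _
      exact absurd (List.nil_prefix) hpre
  | b :: e, q, .leaf i, B, T => by simp [subtreeAt]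
  | b :: e, [], .node L R, B, T => by
      intro hN hB hT hpre hm
      simp only [subtreeAt, Option.some.injEq] at hB hT
      subst hT
      have hN' : (L.leafLabels ++ R.leafLabels).Nodup := hN
      rw [List.nodup_append] at hN'
      cases b with
      | true =>
          simp only [if_pos rfl] at hB
          exact rightmost_chain e R B hN'.2.1 hB hm
      | false =>
          simp only [Bool.false_eq_true, if_neg Bool.false_ne_true] at hB
          exfalso
          have h1 : (node L R).rightmost ∈ R.leafLabels :=
            rightmost_mem_leafLabels R
          exact hN'.2.2 _ (subset_of_subtree hB hm) _ h1 rfl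
  | b :: e, c :: q, .node L R, B, T => by
      intro hN hB hT hpre hm
      simp only [subtreeAt] at hB hT
      have hN' : (L.leafLabels ++ R.leafLabels).Nodup := hN
      rw [List.nodup_append] at hN'
      by_cases hbc : b = c
      · subst hbc
        have hpre' : ¬ (e <+: q) := fun hp => hpre (List.cons_prefix_cons.2 ⟨rfl, hp⟩)
        cases b with
        | true =>
            simp only [if_pos rfl] at hB hT
            exact rightmost_fixed e q R B T hN'.2.1 hB hT hpre' hm
        | false =>
            simp only [Bool.false_eq_true, if_neg Bool.false_ne_true] at hB hT
            exact rightmost_fixed e q L B T hN'.1 hB hT hpre' hm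
      · exfalso
        have hmT : T.rightmost ∈ T.leafLabels := rightmost_mem_leafLabels T
        cases b with
        | true =>
            have hc : c = false := by
              cases c <;> simp_all
            subst hc
            simp only [if_pos rfl] at hB
            simp only [Bool.false_eq_true, if_neg Bool.false_ne_true] at hT
            exact hN'.2.2 _ (subset_of_subtree hT hmT) _ (subset_of_subtree hB hm) rfl
        | false =>
            have hc : c = true := by
              cases c <;> simp_all
            subst hc
            simp only [Bool.false_eq_true, if_neg Bool.false_ne_true] at hB
            simp only [if_pos rfl] at hT
            exact hN'.2.2 _ (subset_of_subtree hB hm) _ (subset_of_subtree hT hmT) rfl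

end PTree

namespace PTree

variable {r : ℕ}

/-- Prefix helpers -/
lemma prefix_dropLast_of_ne {e₀ p : List Bool} (h : e₀ <+: p) (hne : e₀ ≠ p) :
    e₀ <+: p.dropLast := by
  have hlen : e₀.length < p.length :=
    lt_of_le_of_ne h.length_le (fun hl => hne (h.eq_of_length hl))
  rw [List.prefix_iff_eq_take] at h ⊢
  rw [List.dropLast_eq_take, List.take_take]
  rwa [min_eq_left (by omega)]

lemma not_prefix_dropLast {p : List Bool} (hp : p ≠ []) : ¬ (p <+: p.dropLast) := by
  intro h
  have := h.length_le
  rw [List.length_dropLast] at this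
  have : 0 < p.length := List.length_pos_iff.2 hp
  omega

lemma not_prefix_dropLast' {e₀ p : List Bool} (h : ¬ e₀ <+: p) : ¬ (e₀ <+: p.dropLast) :=
  fun h' => h (h'.trans (List.dropLast_prefix p))

lemma exists_node_dropLast {p : List Bool} (hp : p ≠ []) {A T : PTree r}
    (h : A.subtreeAt p = some T) :
    ∃ L R, A.subtreeAt p.dropLast = some (node L R) := by
  rw [← List.dropLast_append_getLast hp, subtreeAt_append] at h
  cases hQ : A.subtreeAt p.dropLast with
  | none => rw [hQ] at h; simp at h
  | some Q =>
      rw [hQ] at h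
      cases Q with
      | leaf i => simp [subtreeAt] at h
      | node L R => exact ⟨L, R, rfl⟩

lemma xAt_eq {A T : PTree r} {p : List Bool} (h : A.subtreeAt p = some T)
    (z : Fin r → ℂ) : xAt A z p = xval z T := by
  simp [xAt, h]

lemma xAt_ne_zero {A : PTree r} (hN : A.leafLabels.Nodup) {z : Fin r → ℂ}
    (hz : z ∈ ConfigSpace r) {p : List Bool} {L R : PTree r}
    (h : A.subtreeAt p = some (node L R)) : xAt A z p ≠ 0 := by
  rw [xAt_eq h]
  have hsub := nodup_of_subtree hN h
  have : (L.leafLabels ++ R.leafLabels).Nodup := hsub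
  rw [List.nodup_append] at this
  have hne : L.rightmost ≠ R.rightmost := by
    intro hEq
    exact this.2.2 _ (rightmost_mem_leafLabels L) _ (rightmost_mem_leafLabels R) hEq
  exact sub_ne_zero.2 (hz _ _ hne)

lemma zetaAt_ne_zero {A : PTree r} (hN : A.leafLabels.Nodup) {z : Fin r → ℂ}
    (hz : z ∈ ConfigSpace r) {p : List Bool} (he : A.IsEdge p) :
    A.zetaAt z p ≠ 0 := by
  obtain ⟨L, R, h⟩ := he.2
  obtain ⟨L', R', h'⟩ := exists_node_dropLast he.1 h
  exact div_ne_zero (xAt_ne_zero hN hz h) (xAt_ne_zero hN hz h')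

/-- The explicit curve in `X_r` realizing the variation of `ζ_{e₀}`. -/
def curve (z : Fin r → ℂ) (leaves : List (Fin r)) (ρ : Fin r) (ζ t : ℂ) : Fin r → ℂ :=
  fun m => z m + ((t - ζ) / ζ) * (if m ∈ leaves then z m - z ρ else 0)

lemma curve_fixed {z : Fin r → ℂ} {leaves : List (Fin r)} {ρ : Fin r} {ζ t : ℂ}
    {m : Fin r} (h : m ∈ leaves → m = ρ) : curve z leaves ρ ζ t m = z m := by
  unfold curve
  by_cases hm : m ∈ leaves
  · rw [if_pos hm, h hm]; ring
  · rw [if_neg hm]; ring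

lemma curve_sub {z : Fin r → ℂ} {leaves : List (Fin r)} {ρ : Fin r} {ζ t : ℂ}
    (hζ : ζ ≠ 0) {a b : Fin r} (ha : a ∈ leaves) (hb : b ∈ leaves) :
    curve z leaves ρ ζ t a - curve z leaves ρ ζ t b = (t / ζ) * (z a - z b) := by
  unfold curve
  rw [if_pos ha, if_pos hb]
  field_simp
  ring

section Curve

variable {A B : PTree r} {e₀ : List Bool} {z : Fin r → ℂ} {t : ℂ}

lemma xAt_curve_scale (hN : A.leafLabels.Nodup) (hB : A.subtreeAt e₀ = some B)
    (hζ : A.zetaAt z e₀ ≠ 0) {q : List Bool} (hq : e₀ <+: q) :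
    xAt A (curve z B.leafLabels B.rightmost (A.zetaAt z e₀) t) q
      = (t / A.zetaAt z e₀) * xAt A z q := by
  cases h : A.subtreeAt q with
  | none => simp [xAt, h]
  | some T =>
      rw [xAt_eq h, xAt_eq h]
      cases T with
      | leaf i => simp [xval]
      | node L R =>
          obtain ⟨s, rfl⟩ := hq
          rw [subtreeAt_append, hB, Option.bind_some] at h
          have hsubset : (node L R).leafLabels ⊆ B.leafLabels := subset_of_subtree h
          have hL : L.rightmost ∈ B.leafLabels := by
            apply hsubset
            show L.rightmost ∈ L.leafLabels ++ R.leafLabels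
            exact List.mem_append.2 (Or.inl (rightmost_mem_leafLabels L))
          have hR : R.rightmost ∈ B.leafLabels := by
            apply hsubset
            show R.rightmost ∈ L.leafLabels ++ R.leafLabels
            exact List.mem_append.2 (Or.inr (rightmost_mem_leafLabels R))
          show curve _ _ _ _ _ L.rightmost - curve _ _ _ _ _ R.rightmost = _
          rw [curve_sub hζ hL hR]
          rfl

lemma xAt_curve_fixed (hN : A.leafLabels.Nodup) (hB : A.subtreeAt e₀ = some B)
    {q : List Bool} (hq : ¬ (e₀ <+: q)) :
    xAt A (curve z B.leafLabels B.rightmost (A.zetaAt z e₀) t) q = xAt A z q := by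
  cases h : A.subtreeAt q with
  | none => simp [xAt, h]
  | some T =>
      rw [xAt_eq h, xAt_eq h]
      cases T with
      | leaf i => simp [xval]
      | node L R =>
          have key : ∀ (c : Bool) (T' : PTree r), A.subtreeAt (q ++ [c]) = some T' →
              (T'.rightmost ∈ B.leafLabels → T'.rightmost = B.rightmost) := by
            intro c T' h' hm
            by_cases heq : e₀ = q ++ [c]
            · subst heq
              rw [hB] at h'
              cases h'
              rfl
            · have hpre : ¬ (e₀ <+: q ++ [c]) := by
                intro hp
                rcases List.prefix_concat_iff.1 hp with h1 | h1
                · exact heq h1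
                · exact hq h1
              exact rightmost_fixed e₀ (q ++ [c]) A B T' hN hB h' hpre hm
          have hLsub : A.subtreeAt (q ++ [false]) = some L := by
            rw [subtreeAt_append, h, Option.bind_some]
            simp [subtreeAt]
          have hRsub : A.subtreeAt (q ++ [true]) = some R := by
            rw [subtreeAt_append, h, Option.bind_some]
            simp [subtreeAt]
          show curve _ _ _ _ _ L.rightmost - curve _ _ _ _ _ R.rightmost = _
          rw [curve_fixed (key false L hLsub), curve_fixed (key true R hRsub)]
          rfl

end Curve

end PTree

namespace PTree

variable {r : ℕ}

lemma isOpen_configSpace : IsOpen (ConfigSpace r) := by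
  have : ConfigSpace r = ⋂ (i : Fin r) (j : Fin r) (_ : i ≠ j),
      {z : Fin r → ℂ | z i ≠ z j} := by
    ext w
    simp only [ConfigSpace, Set.mem_setOf_eq, Set.mem_iInter]
  rw [this]
  refine isOpen_iInter_of_finite fun i => isOpen_iInter_of_finite fun j => ?_
  refine isOpen_iInter_of_finite fun _ => ?_
  exact isOpen_ne_fun (continuous_apply i) (continuous_apply j)

lemma list_sum_single {L : List (Fin r)} (hL : L.Nodup) (c : Fin r → ℂ) :
    (L.map fun l => c l • (Pi.single l (1 : ℂ) : Fin r → ℂ)).sum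
      = fun m => if m ∈ L then c m else 0 := by
  induction L with
  | nil => funext m; simp
  | cons a L ih =>
      obtain ⟨ha, hL'⟩ := List.nodup_cons.1 hL
      funext m
      have ihm := congrFun (ih hL') m
      simp only [List.map_cons, List.sum_cons]
      rw [Pi.add_apply, ihm]
      by_cases hm : m = a
      · subst hm
        rw [if_pos (List.mem_cons_self), if_neg ha]
        simp [Pi.single_eq_same]
      · simp [Pi.single_eq_of_ne hm, hm]

lemma subtreeAt_nil (A : PTree r) : A.subtreeAt [] = some A := by
  cases A <;> rfl

lemma psi_curve {A B : PTree r} {e₀ : List Bool} (hN : A.leafLabels.Nodup)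
    (he₀ : A.IsEdge e₀) (hB : A.subtreeAt e₀ = some B)
    {z : Fin r → ℂ} (hz : z ∈ ConfigSpace r) {t : ℂ} (ht : t ≠ 0) :
    A.psi (curve z B.leafLabels B.rightmost (A.zetaAt z e₀) t)
      = ((A.psi z).1, (A.psi z).2.1, Function.update (A.psi z).2.2 ⟨e₀, he₀⟩ t) := by
  have hζ : A.zetaAt z e₀ ≠ 0 := zetaAt_ne_zero hN hz he₀
  have hroot : ¬ (e₀ <+: ([] : List Bool)) := by
    rw [List.prefix_nil]; exact he₀.1
  have hAself : A.subtreeAt [] = some A := subtreeAt_nil A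
  refine Prod.ext ?_ (Prod.ext ?_ ?_)
  · show curve z B.leafLabels B.rightmost (A.zetaAt z e₀) t A.rightmost
      = (A.psi z).1
    exact curve_fixed (rightmost_fixed e₀ [] A B A hN hB hAself hroot)
  · show xval (curve z B.leafLabels B.rightmost (A.zetaAt z e₀) t) A
      = (A.psi z).2.1
    have := xAt_curve_fixed (z := z) (t := t) hN hB hroot
    rwa [xAt_eq hAself, xAt_eq hAself] at this
  · funext e
    show A.zetaAt (curve z B.leafLabels B.rightmost (A.zetaAt z e₀) t) e.1
      = Function.update (A.psi z).2.2 ⟨e₀, he₀⟩ t e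
    by_cases he : e = ⟨e₀, he₀⟩
    · subst he
      rw [Function.update_self]
      show xAt A _ e₀ / xAt A _ e₀.dropLast = t
      rw [xAt_curve_scale hN hB hζ List.prefix_rfl,
          xAt_curve_fixed hN hB (not_prefix_dropLast he₀.1), mul_div_assoc]
      show t / A.zetaAt z e₀ * A.zetaAt z e₀ = t
      exact div_mul_cancel₀ t hζ
    · rw [Function.update_of_ne he]
      have hne : e₀ ≠ e.1 := fun h => he (Subtype.ext h.symm)
      show xAt A _ e.1 / xAt A _ e.1.dropLast = A.zetaAt z e.1
      by_cases hp : e₀ <+: e.1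
      · rw [xAt_curve_scale hN hB hζ hp,
            xAt_curve_scale hN hB hζ (prefix_dropLast_of_ne hp hne)]
        exact mul_div_mul_left _ _ (div_ne_zero ht hζ)
      · rw [xAt_curve_fixed hN hB hp, xAt_curve_fixed hN hB (not_prefix_dropLast' hp)]
        rfl

end PTree

/-- Let `r ≥ 3`, `A ∈ 𝒯_r` and `e₀ ∈ E(A)`, and let `Φ_A` be the polynomial
map inverting `Ψ_A`.  For every point `z ∈ X_r` and every function
`f : ℂ^r → ℂ` complex-differentiable at `z`,
`Σ_{l ∈ Leaf(e₀)} (z_l − z_{R(d(e₀))}) · ∂f/∂z_l (z)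
  = ζ_{e₀}(z) · ∂(f ∘ Φ_A)/∂ζ_{e₀} (Ψ_A(z))`,
where the partial derivative on the right is taken in the `ζ_{e₀}`-slot of the
`A`-coordinates; that is, the differential operator `ζ_e d/dζ_e` in
`A`-coordinates equals `Σ_{l ∈ Leaf(e)} (z_l − z_{R(d(e))}) ∂_l` on `X_r`. -/
theorem stmt_9 {r : ℕ} (hr : 3 ≤ r) (A : PTree r) (hA : A.IsTree)
    (e₀ : List Bool) (he₀ : A.IsEdge e₀)
    (ρ : Fin r) (hρ : A.rightmostAt e₀ = some ρ)
    (P : Fin r → MvPolynomial A.Idx ℂ)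
    (hPhiPsi : A.PhiPsiId P) (hPsiPhi : A.PsiPhiId P)
    (z : Fin r → ℂ) (hz : z ∈ ConfigSpace r)
    (f : (Fin r → ℂ) → ℂ) (hf : DifferentiableAt ℂ f z) :
    ((A.leavesAt e₀).map fun l => (z l - z ρ) * fderiv ℂ f z (Pi.single l 1)).sum =
      A.zetaAt z e₀ *
        deriv
          (fun t : ℂ =>
            f (A.phiMap P
                ((A.psi z).1, (A.psi z).2.1,
                  Function.update (A.psi z).2.2 ⟨e₀, he₀⟩ t)))
          (A.zetaAt z e₀) := by
  classical
  obtain ⟨BL, BR, hB⟩ := he₀.2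
  set B : PTree r := .node BL BR with hBdef
  have hN : A.leafLabels.Nodup := hA.1
  have hρ' : ρ = B.rightmost := by
    rw [PTree.rightmostAt, hB] at hρ
    simpa using hρ.symm
  have hleaves : A.leavesAt e₀ = B.leafLabels := by
    rw [PTree.leavesAt, hB]; rfl
  have hNB : B.leafLabels.Nodup := PTree.nodup_of_subtree hN hB
  set ζ := A.zetaAt z e₀ with hζdef
  have hζ : ζ ≠ 0 := PTree.zetaAt_ne_zero hN hz he₀
  set D := fderiv ℂ f z with hDdef
  set u : Fin r → ℂ := fun m => if m ∈ B.leafLabels then z m - z ρ else 0 with hu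
  -- LHS
  have hLHS : ((A.leavesAt e₀).map fun l => (z l - z ρ) * D (Pi.single l 1)).sum = D u := by
    rw [hleaves]
    have h1 : (B.leafLabels.map fun l => (z l - z ρ) * D (Pi.single l 1))
        = (B.leafLabels.map fun l => (z l - z ρ) • (Pi.single l (1:ℂ) : Fin r → ℂ)).map ⇑D := by
      rw [List.map_map]
      refine List.map_congr_left fun l _ => ?_
      show (z l - z ρ) * D (Pi.single l 1)
        = D ((z l - z ρ) • (Pi.single l (1:ℂ) : Fin r → ℂ))
      rw [map_smul, smul_eq_mul]
    rw [h1, ← map_list_sum D, PTree.list_sum_single hNB]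
  -- the curve
  set γ : ℂ → Fin r → ℂ := fun t => PTree.curve z B.leafLabels B.rightmost ζ t with hγ
  have hγζ : γ ζ = z := by
    funext m
    simp [hγ, PTree.curve]
  have hcont : Continuous γ := by
    apply continuous_pi
    intro m
    simp only [hγ, PTree.curve]
    fun_prop
  -- eventual equality
  have heq : (fun t : ℂ =>
        f (A.phiMap P
            ((A.psi z).1, (A.psi z).2.1, Function.update (A.psi z).2.2 ⟨e₀, he₀⟩ t)))
      =ᶠ[nhds ζ] fun t => f (γ t) := by
    have h1 : ∀ᶠ t in nhds ζ, t ≠ 0 := eventually_ne_nhds hζ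
    have h2 : ∀ᶠ t in nhds ζ, γ t ∈ ConfigSpace r := by
      refine hcont.continuousAt.eventually_mem ?_
      rw [hγζ]
      exact PTree.isOpen_configSpace.mem_nhds hz
    filter_upwards [h1, h2] with t ht hmem
    have hpsi := PTree.psi_curve hN he₀ hB hz ht
    have h3 := hPhiPsi (γ t) hmem
    rw [← hζdef] at hpsi
    rw [← hpsi, h3]
  -- derivative of the curve composition
  have hγd : HasDerivAt γ (ζ⁻¹ • u) ζ := by
    rw [hasDerivAt_pi]
    intro m
    have h4 : HasDerivAt (fun t : ℂ => z m + ((t - ζ) / ζ) *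
        (if m ∈ B.leafLabels then z m - z B.rightmost else 0))
        ((1 / ζ) * (if m ∈ B.leafLabels then z m - z B.rightmost else 0)) ζ :=
      ((((hasDerivAt_id ζ).sub_const ζ).div_const ζ).mul_const _).const_add (z m)
    refine h4.congr_deriv ?_
    simp only [Pi.smul_apply, hu, smul_eq_mul, one_div, hρ']
  have hcomp : HasDerivAt (fun t => f (γ t)) (D (ζ⁻¹ • u)) ζ := by
    have hfd : HasFDerivAt f D (γ ζ) := by
      rw [hγζ]; exact hf.hasFDerivAt
    exact hfd.comp_hasDerivAt ζ hγd
  rw [hLHS, heq.deriv_eq, hcomp.deriv, map_smul, smul_eq_mul, ← mul_assoc,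
    mul_inv_cancel₀ hζ, one_mul]
end
end

section
/- Let r ≥ 3, A ∈ 𝒯_r and e_0 ∈ E(A). Let ρ = R(d(e_0)) (the rightmost leaf label in Leaf(e_0)), let s ∈ Leaf(e_0) with s ≠ ρ, and let i ∈ {1,…,r} ∖ Leaf(e_0). Then there exists a formal power series g ∈ ℂ[[ζ_e : e ∈ E(A)]] such that (z_s − z_ρ) ∘ Φ_A = ζ_{e_0} · g · ((z_ρ − z_i) ∘ Φ_A) holds in the ring ℂ[x_A][[ζ_e : e ∈ E(A)]]; that is, the expansion of (z_s − z_ρ)/(z_ρ − z_i) in A-coordinates lies in ζ_{e_0}·ℂ[[ζ_e : e ∈ E(A)]]. -/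
noncomputable section

namespace StmtAux

open MvPolynomial

variable {r : ℕ}

/-! ### Tree lemmas -/

lemma subtreeAt_append (B : PTree r) (p q : List Bool) :
    B.subtreeAt (p ++ q) = (B.subtreeAt p).bind (fun t => t.subtreeAt q) := by
  induction p generalizing B with
  | nil => simp [PTree.subtreeAt]
  | cons b p ih =>
    cases B with
    | leaf i => simp [PTree.subtreeAt]
    | node l t =>
      simp only [List.cons_append, PTree.subtreeAt]
      exact ih _

lemma mem_leafLabels_of_subtree {B C : PTree r} {q : List Bool}
    (h : B.subtreeAt q = some C) : ∀ x ∈ C.leafLabels, x ∈ B.leafLabels := by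
  induction q generalizing B with
  | nil =>
    simp only [PTree.subtreeAt, Option.some.injEq] at h
    subst h; exact fun x hx => hx
  | cons b q ih =>
    cases B with
    | leaf i => simp [PTree.subtreeAt] at h
    | node l t =>
      intro x hx
      simp only [PTree.subtreeAt] at h
      simp only [PTree.leafLabels, List.mem_append]
      cases b with
      | false => simp only [Bool.false_eq_true, if_false] at h; exact Or.inl (ih h x hx)
      | true => simp only [if_true] at h; exact Or.inr (ih h x hx)

lemma rightmost_mem (B : PTree r) : B.rightmost ∈ B.leafLabels := by
  induction B with
  | leaf i => simp [PTree.rightmost, PTree.leafLabels]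
  | node l t ihl iht =>
    simp only [PTree.rightmost, PTree.leafLabels, List.mem_append]
    exact Or.inr iht

lemma node_of_subtreeAt_cons {B C : PTree r} {b : Bool} {q : List Bool}
    (h : B.subtreeAt (b :: q) = some C) : ∃ l t, B = PTree.node l t := by
  cases B with
  | leaf i => simp [PTree.subtreeAt] at h
  | node l t => exact ⟨l, t, rfl⟩

lemma subtreeAt_child {A : PTree r} {p : List Bool} {l t : PTree r}
    (h : A.subtreeAt p = some (PTree.node l t)) (b : Bool) :
    A.subtreeAt (p ++ [b]) = some (if b then t else l) := by
  rw [subtreeAt_append, h]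
  cases b <;> simp [PTree.subtreeAt]

/-! ### Degree of a finitely supported exponent -/

def dg {α : Type*} (m : α →₀ ℕ) : ℕ := m.sum fun _ k => k

lemma dg_add {α : Type*} (a b : α →₀ ℕ) : dg (a + b) = dg a + dg b :=
  Finsupp.sum_add_index' (fun _ => rfl) (fun _ _ _ => rfl)

lemma dg_pos {α : Type*} {a : α →₀ ℕ} (h : a ≠ 0) : 0 < dg a := by
  rcases Finsupp.ne_iff.mp h with ⟨i, hi⟩
  simp only [Finsupp.coe_zero, Pi.zero_apply] at hi
  have hmem : i ∈ a.support := Finsupp.mem_support_iff.mpr hi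
  calc 0 < a i := Nat.pos_of_ne_zero hi
    _ ≤ dg a := Finset.single_le_sum (fun _ _ => Nat.zero_le _) hmem

end StmtAux
namespace StmtAux

open MvPolynomial

variable {r : ℕ} {A : PTree r}

/-- Bad exponents: those involving `z_A` or `x_A`. -/
def Bad (A : PTree r) (m : A.Idx →₀ ℕ) : Prop :=
  m (Sum.inl ()) ≠ 0 ∨ m (Sum.inr (Sum.inl ())) ≠ 0

lemma Bad.ne_zero {m : A.Idx →₀ ℕ} (h : Bad A m) : m ≠ 0 := by
  rintro rfl
  rcases h with h | h <;> simp at h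

lemma bad_of_add {a b m : A.Idx →₀ ℕ} (hm : a + b = m) (h : Bad A m)
    (ha : ¬ Bad A a) : Bad A b := by
  subst hm
  rcases h with h | h
  · left
    simp only [Finsupp.add_apply] at h
    intro hb
    exact h (by simp [hb, Classical.not_not.mp (fun hh => ha (Or.inl hh))])
  · right
    simp only [Finsupp.add_apply] at h
    intro hb
    exact h (by simp [hb, Classical.not_not.mp (fun hh => ha (Or.inr hh))])

/-- A power series involving only the edge variables `ζ_e`. -/
def EO (A : PTree r) (f : MvPowerSeries A.Idx ℂ) : Prop :=
  ∀ m : A.Idx →₀ ℕ, Bad A m → MvPowerSeries.coeff m f = 0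

/-- A polynomial involving only the edge variables `ζ_e`. -/
def EOp (A : PTree r) (W : MvPolynomial A.Idx ℂ) : Prop :=
  ∀ m : A.Idx →₀ ℕ, Bad A m → MvPolynomial.coeff m W = 0

lemma EOp_zero : EOp A (0 : MvPolynomial A.Idx ℂ) := fun m _ => by simp

lemma EOp_one : EOp A (1 : MvPolynomial A.Idx ℂ) := by
  intro m hm
  rw [MvPolynomial.coeff_one, if_neg (Ne.symm hm.ne_zero)]

lemma EOp_X (e : A.Edge) : EOp A (MvPolynomial.X (Sum.inr (Sum.inr e)) : MvPolynomial A.Idx ℂ) := by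
  intro m hm
  rw [MvPolynomial.coeff_X', if_neg]
  rintro rfl
  rcases hm with h | h <;> simp [Finsupp.single_apply] at h

lemma EOp.add {f g : MvPolynomial A.Idx ℂ} (hf : EOp A f) (hg : EOp A g) : EOp A (f + g) := by
  intro m hm; rw [MvPolynomial.coeff_add, hf m hm, hg m hm, add_zero]

lemma EOp.sub {f g : MvPolynomial A.Idx ℂ} (hf : EOp A f) (hg : EOp A g) : EOp A (f - g) := by
  intro m hm; rw [MvPolynomial.coeff_sub, hf m hm, hg m hm, sub_zero]

lemma EOp.mul {f g : MvPolynomial A.Idx ℂ} (hf : EOp A f) (hg : EOp A g) : EOp A (f * g) := by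
  classical
  intro m hm
  rw [MvPolynomial.coeff_mul]
  apply Finset.sum_eq_zero
  rintro ⟨a, b⟩ hab
  rw [Finset.HasAntidiagonal.mem_antidiagonal] at hab
  by_cases ha : Bad A a
  · rw [hf a ha, zero_mul]
  · rw [hg b (bad_of_add hab hm ha), mul_zero]

lemma EO_coe {W : MvPolynomial A.Idx ℂ} (h : EOp A W) : EO A (W : MvPowerSeries A.Idx ℂ) := by
  intro m hm; rw [MvPolynomial.coeff_coe]; exact h m hm

lemma EO.mul {f g : MvPowerSeries A.Idx ℂ} (hf : EO A f) (hg : EO A g) : EO A (f * g) := by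
  classical
  intro m hm
  rw [MvPowerSeries.coeff_mul]
  apply Finset.sum_eq_zero
  rintro ⟨a, b⟩ hab
  rw [Finset.HasAntidiagonal.mem_antidiagonal] at hab
  by_cases ha : Bad A a
  · rw [hf a ha, zero_mul]
  · rw [hg b (bad_of_add hab hm ha), mul_zero]

lemma EO_invOfUnit {f : MvPowerSeries A.Idx ℂ} {u : ℂˣ}
    (hu : MvPowerSeries.constantCoeff f = u) (hf : EO A f) :
    EO A (MvPowerSeries.invOfUnit f u) := by
  classical
  set h := MvPowerSeries.invOfUnit f u with hh
  have key : f * h = 1 := MvPowerSeries.mul_invOfUnit f u hu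
  -- strong induction on the degree of m
  suffices H : ∀ n : ℕ, ∀ m : A.Idx →₀ ℕ, dg m ≤ n → Bad A m →
      MvPowerSeries.coeff m h = 0 by
    intro m hm; exact H (dg m) m le_rfl hm
  intro n
  induction n with
  | zero =>
    intro m hdg hm
    have := dg_pos hm.ne_zero
    omega
  | succ n ih =>
    intro m hdg hm
    have h1 : MvPowerSeries.coeff m (f * h) = 0 := by
      rw [key, MvPowerSeries.coeff_one, if_neg hm.ne_zero]
    rw [MvPowerSeries.coeff_mul] at h1
    have hmem : ((0 : A.Idx →₀ ℕ), m) ∈ Finset.HasAntidiagonal.antidiagonal m := by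
      rw [Finset.HasAntidiagonal.mem_antidiagonal]; simp
    rw [← Finset.add_sum_erase _ _ hmem] at h1
    have hrest : ∑ x ∈ (Finset.HasAntidiagonal.antidiagonal m).erase (0, m),
        MvPowerSeries.coeff x.1 f * MvPowerSeries.coeff x.2 h = 0 := by
      apply Finset.sum_eq_zero
      rintro ⟨a, b⟩ hab
      rw [Finset.mem_erase, Finset.HasAntidiagonal.mem_antidiagonal] at hab
      obtain ⟨hne, hadd⟩ := hab
      by_cases ha : Bad A a
      · rw [hf a ha, zero_mul]
      · have hb : Bad A b := bad_of_add hadd hm ha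
        have ha0 : a ≠ 0 := by
          rintro rfl
          exact hne (by simp_all)
        have hdb : dg b ≤ n := by
          have := dg_add a b
          rw [hadd] at this
          have hpos := dg_pos ha0
          omega
        rw [ih b hdb hb, mul_zero]
    rw [hrest, add_zero] at h1
    have hc : MvPowerSeries.coeff 0 f ≠ 0 := by
      rw [MvPowerSeries.coeff_zero_eq_constantCoeff_apply, hu]
      exact u.ne_zero
    exact (mul_eq_zero.mp h1).resolve_left hc

end StmtAux
namespace StmtAux

open MvPolynomial

variable {r : ℕ} {A : PTree r}

/-- A polynomial vanishing on the dense set `{x_A ≠ 0, ζ_e ≠ 0}` is zero. -/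
lemma vanish (Q : MvPolynomial A.Idx ℂ)
    (h : ∀ w : ℂ × ℂ × (A.Edge → ℂ), w.2.1 ≠ 0 → (∀ e, w.2.2 e ≠ 0) →
      MvPolynomial.eval (A.assign w) Q = 0) : Q = 0 := by
  classical
  set xv : A.Idx := Sum.inr (Sum.inl ()) with hxvdef
  set g : A.Idx → MvPolynomial A.Idx ℂ :=
    Sum.elim (fun _ => 1) (Sum.elim (fun _ => 1) (fun e => X (Sum.inr (Sum.inr e)))) with hgdef
  have key : ∀ v : A.Idx → ℂ, eval v (Q * (X xv * ∏ sᵥ ∈ Q.vars, g sᵥ)) = 0 := by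
    intro v
    by_cases hx : v xv = 0
    · simp [hx]
    by_cases he : ∃ e : A.Edge, (Sum.inr (Sum.inr e) : A.Idx) ∈ Q.vars ∧
        v (Sum.inr (Sum.inr e)) = 0
    · obtain ⟨e, hmem, hz⟩ := he
      have : eval v (∏ sᵥ ∈ Q.vars, g sᵥ) = 0 := by
        rw [map_prod]
        apply Finset.prod_eq_zero hmem
        simp [hgdef, hz]
      simp [this]
    push_neg at he
    set w : ℂ × ℂ × (A.Edge → ℂ) :=
      (v (Sum.inl ()), v xv,
        fun e => if (Sum.inr (Sum.inr e) : A.Idx) ∈ Q.vars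
          then v (Sum.inr (Sum.inr e)) else 1) with hwdef
    have h2 : ∀ e, w.2.2 e ≠ 0 := by
      intro e
      simp only [hwdef]
      split_ifs with hmem
      · exact he e hmem
      · exact one_ne_zero
    have hQ0 : eval (A.assign w) Q = 0 := h w hx h2
    have hQv : eval v Q = eval (A.assign w) Q := by
      apply MvPolynomial.hom_congr_vars
      · ext a : 2
        simp
      · intro j hj _
        simp only [eval_X]
        rcases j with _ | (_ | e)
        · rfl
        · rfl
        · simp only [PTree.assign, Sum.elim_inr, hwdef]
          rw [if_pos hj]
      · rfl
    rw [map_mul, hQv, hQ0, zero_mul]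
  have h0 : Q * (X xv * ∏ sᵥ ∈ Q.vars, g sᵥ) = 0 := by
    apply MvPolynomial.funext
    intro x
    rw [key x, map_zero]
  rcases mul_eq_zero.mp h0 with hQ | hrest
  · exact hQ
  · exfalso
    rcases mul_eq_zero.mp hrest with hX | hprod
    · exact MvPolynomial.X_ne_zero _ hX
    · rcases Finset.prod_eq_zero_iff.mp hprod with ⟨j, _, hgj⟩
      rcases j with _ | (_ | e)
      · exact one_ne_zero hgj
      · exact one_ne_zero hgj
      · exact MvPolynomial.X_ne_zero _ hgj

variable {P : Fin r → MvPolynomial A.Idx ℂ}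

/-- `x_{t_A} ∘ Φ_A = x_A` as polynomials. -/
lemma root_eq (hP : A.PsiPhiId P) (l t : PTree r) (hAn : A = PTree.node l t) :
    P l.rightmost - P t.rightmost = X (Sum.inr (Sum.inl ())) := by
  rw [← sub_eq_zero]
  apply vanish
  intro w h1 h2
  have hpsi := hP w h1 h2
  have hx0 : PTree.xval (A.phiMap P w) A = w.2.1 := congrArg (fun z => z.2.1) hpsi
  have hx : PTree.xval (A.phiMap P w) (PTree.node l t) = w.2.1 := by rw [← hAn]; exact hx0
  simp only [PTree.xval] at hx
  have : ∀ j, eval (A.assign w) (P j) = A.phiMap P w j := fun _ => rfl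
  simp only [map_sub, eval_X, this]
  rw [hx]
  have : A.assign w (Sum.inr (Sum.inl ())) = w.2.1 := rfl
  rw [this, sub_self]

/-- `x_{d(e)} ∘ Φ_A = ζ_e · (x_{u(e)} ∘ Φ_A)` as polynomials. -/
lemma edge_eq (hP : A.PsiPhiId P) (q : List Bool) (hq : A.IsEdge q)
    (l t l' t' : PTree r)
    (h1 : A.subtreeAt q = some (PTree.node l t))
    (h2 : A.subtreeAt q.dropLast = some (PTree.node l' t')) :
    P l.rightmost - P t.rightmost
      = (P l'.rightmost - P t'.rightmost) * X (Sum.inr (Sum.inr ⟨q, hq⟩)) := by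
  rw [← sub_eq_zero]
  apply vanish
  intro w hw1 hw2
  have hpsi := hP w hw1 hw2
  set Z := A.phiMap P w with hZ
  have hze : A.zetaAt Z q = w.2.2 ⟨q, hq⟩ := by
    have := congrArg (fun z => z.2.2) hpsi
    exact congrFun this ⟨q, hq⟩
  have hxa : A.xAt Z q = Z l.rightmost - Z t.rightmost := by
    simp [PTree.xAt, h1, PTree.xval]
  have hxb : A.xAt Z q.dropLast = Z l'.rightmost - Z t'.rightmost := by
    simp [PTree.xAt, h2, PTree.xval]
  set c := w.2.2 ⟨q, hq⟩ with hc
  have hcne : c ≠ 0 := hw2 _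
  rw [PTree.zetaAt, hxa, hxb] at hze
  set a := Z l.rightmost - Z t.rightmost
  set b := Z l'.rightmost - Z t'.rightmost
  have hbne : b ≠ 0 := by
    intro h0
    rw [h0, div_zero] at hze
    exact hcne hze.symm
  have hab : a = c * b := (div_eq_iff hbne).mp hze
  have hevP : ∀ j, eval (A.assign w) (P j) = Z j := fun _ => rfl
  have hevX : eval (A.assign w) (X (Sum.inr (Sum.inr ⟨q, hq⟩)) : MvPolynomial A.Idx ℂ) = c := by
    rw [eval_X]; rfl
  simp only [map_sub, map_mul, hevP, hevX]
  rw [show Z l.rightmost - Z t.rightmost = a from rfl,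
    show Z l'.rightmost - Z t'.rightmost = b from rfl, hab]
  ring

end StmtAux
namespace StmtAux

open MvPolynomial

variable {r : ℕ} {A : PTree r} {P : Fin r → MvPolynomial A.Idx ℂ}

/-- `x_v ∘ Φ_A` as a polynomial, for the vertex `v` given as the subtree
rooted at it. -/
def xp (P : Fin r → MvPolynomial A.Idx ℂ) : PTree r → MvPolynomial A.Idx ℂ
  | .leaf _ => 0
  | .node l t => P l.rightmost - P t.rightmost

/-- The edge relation `x_{d(e)} ∘ Φ_A = (x_{u(e)} ∘ Φ_A) · ζ_e` for the edge
from a vertex to an internal child. -/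
lemma xp_child (hP : A.PsiPhiId P) {p : List Bool} {b : Bool} {lB tB : PTree r}
    (hB : A.subtreeAt p = some (PTree.node lB tB))
    {l t : PTree r} (hC : A.subtreeAt (p ++ [b]) = some (PTree.node l t)) :
    ∃ hE : A.IsEdge (p ++ [b]),
      xp P (PTree.node l t)
        = xp P (PTree.node lB tB) * X (Sum.inr (Sum.inr ⟨p ++ [b], hE⟩)) := by
  have hE : A.IsEdge (p ++ [b]) := ⟨by simp, ⟨l, t, hC⟩⟩
  refine ⟨hE, ?_⟩
  have hdl : (p ++ [b]).dropLast = p := List.dropLast_concat ..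
  exact edge_eq hP (p ++ [b]) hE l t lB tB hC (by rw [hdl]; exact hB)

/-- Main structural lemma: for a leaf `j` below a vertex `v`,
`(z_j − z_{R(v)}) ∘ Φ_A = (x_v ∘ Φ_A) · W` with `W` involving only the
`ζ_e`. -/
lemma main1 (hP : A.PsiPhiId P) :
    ∀ (B : PTree r) (p : List Bool), A.subtreeAt p = some B →
      ∀ j ∈ B.leafLabels,
        ∃ W, EOp A W ∧ P j - P B.rightmost = xp P B * W := by
  intro B
  induction B with
  | leaf a =>
    intro p hp j hj
    simp only [PTree.leafLabels, List.mem_singleton] at hj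
    subst hj
    exact ⟨0, EOp_zero, by simp [xp, PTree.rightmost]⟩
  | node l t ihl iht =>
    intro p hp j hj
    have hpl : A.subtreeAt (p ++ [false]) = some l := by
      simpa using subtreeAt_child hp false
    have hpt : A.subtreeAt (p ++ [true]) = some t := by
      simpa using subtreeAt_child hp true
    rcases List.mem_append.mp hj with hjl | hjt
    · -- j in the left child
      obtain ⟨W', hW', hEq'⟩ := ihl (p ++ [false]) hpl j hjl
      cases l with
      | leaf a =>
        simp only [PTree.leafLabels, List.mem_singleton] at hjl
        subst hjl
        refine ⟨1, EOp_one, ?_⟩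
        simp only [PTree.rightmost, xp, mul_one]
      | node ll lt =>
        obtain ⟨hE, hstep⟩ := xp_child hP hp hpl
        refine ⟨X (Sum.inr (Sum.inr ⟨p ++ [false], hE⟩)) * W' + 1,
          (EOp.mul (EOp_X _) hW').add EOp_one, ?_⟩
        have hsplit : P j - P (PTree.node (PTree.node ll lt) t).rightmost
            = (P j - P (PTree.node ll lt).rightmost) + xp P (PTree.node (PTree.node ll lt) t) := by
          simp only [PTree.rightmost, xp]
          ring
        rw [hsplit, hEq', hstep]
        ring
    · -- j in the right child
      obtain ⟨W', hW', hEq'⟩ := iht (p ++ [true]) hpt j hjt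
      cases t with
      | leaf a =>
        simp only [PTree.leafLabels, List.mem_singleton] at hjt
        subst hjt
        refine ⟨0, EOp_zero, ?_⟩
        simp only [PTree.rightmost, xp, mul_zero]
        simpa [xp, PTree.rightmost] using hEq'
      | node tl tt =>
        obtain ⟨hE, hstep⟩ := xp_child hP hp hpt
        refine ⟨X (Sum.inr (Sum.inr ⟨p ++ [true], hE⟩)) * W', EOp.mul (EOp_X _) hW', ?_⟩
        have : P j - P (PTree.node l (PTree.node tl tt)).rightmost
            = P j - P (PTree.node tl tt).rightmost := by
          simp [PTree.rightmost]
        rw [this, hEq', hstep]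
        ring

/-- Refined version, left child: the cofactor has constant coefficient `1`. -/
lemma main1L (hP : A.PsiPhiId P) {p : List Bool} {l t : PTree r}
    (hp : A.subtreeAt p = some (PTree.node l t)) {j : Fin r} (hj : j ∈ l.leafLabels) :
    ∃ W, EOp A W ∧ P j - P (PTree.node l t).rightmost = xp P (PTree.node l t) * W ∧
      constantCoeff W = 1 := by
  have hpl : A.subtreeAt (p ++ [false]) = some l := by
    simpa using subtreeAt_child hp false
  cases l with
  | leaf a =>
    simp only [PTree.leafLabels, List.mem_singleton] at hj
    subst hj
    exact ⟨1, EOp_one, by simp [xp, PTree.rightmost], map_one _⟩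
  | node ll lt =>
    obtain ⟨W', hW', hEq'⟩ := main1 hP (PTree.node ll lt) (p ++ [false]) hpl j hj
    obtain ⟨hE, hstep⟩ := xp_child hP hp hpl
    refine ⟨X (Sum.inr (Sum.inr ⟨p ++ [false], hE⟩)) * W' + 1,
      (EOp.mul (EOp_X _) hW').add EOp_one, ?_, by simp⟩
    have hsplit : P j - P (PTree.node (PTree.node ll lt) t).rightmost
        = (P j - P (PTree.node ll lt).rightmost) + xp P (PTree.node (PTree.node ll lt) t) := by
      simp only [PTree.rightmost, xp]
      ring
    rw [hsplit, hEq', hstep]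
    ring

/-- Refined version, right child: the cofactor has constant coefficient `0`. -/
lemma main1R (hP : A.PsiPhiId P) {p : List Bool} {l t : PTree r}
    (hp : A.subtreeAt p = some (PTree.node l t)) {j : Fin r} (hj : j ∈ t.leafLabels) :
    ∃ W, EOp A W ∧ P j - P (PTree.node l t).rightmost = xp P (PTree.node l t) * W ∧
      constantCoeff W = 0 := by
  have hpt : A.subtreeAt (p ++ [true]) = some t := by
    simpa using subtreeAt_child hp true
  cases t with
  | leaf a =>
    simp only [PTree.leafLabels, List.mem_singleton] at hj
    subst hj
    exact ⟨0, EOp_zero, by simp [xp, PTree.rightmost], map_zero _⟩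
  | node tl tt =>
    obtain ⟨W', hW', hEq'⟩ := main1 hP (PTree.node tl tt) (p ++ [true]) hpt j hj
    obtain ⟨hE, hstep⟩ := xp_child hP hp hpt
    refine ⟨X (Sum.inr (Sum.inr ⟨p ++ [true], hE⟩)) * W', EOp.mul (EOp_X _) hW', ?_, by simp⟩
    have : P j - P (PTree.node l (PTree.node tl tt)).rightmost
        = P j - P (PTree.node tl tt).rightmost := by
      simp [PTree.rightmost]
    rw [this, hEq', hstep]
    ring

end StmtAux
namespace StmtAux

open MvPolynomial

variable {r : ℕ} {A : PTree r} {P : Fin r → MvPolynomial A.Idx ℂ}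

/-- Path lemma: `x_{d(e)} ∘ Φ_A = (x_v ∘ Φ_A) · M · ζ_e` for any vertex `v`
above `d(e)`, with `M` a product of edge variables. -/
lemma path (hP : A.PsiPhiId P) :
    ∀ (q p : List Bool), q ≠ [] →
      ∀ (lB tB : PTree r), A.subtreeAt p = some (PTree.node lB tB) →
      ∀ (lC tC : PTree r), A.subtreeAt (p ++ q) = some (PTree.node lC tC) →
      ∀ (hE : A.IsEdge (p ++ q)),
        ∃ M, EOp A M ∧ xp P (PTree.node lC tC)
          = xp P (PTree.node lB tB) * M * X (Sum.inr (Sum.inr ⟨p ++ q, hE⟩)) := by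
  intro q
  induction q with
  | nil => intro p hq; exact absurd rfl hq
  | cons b q' ih =>
    intro p _ lB tB hB lC tC hC hE
    have hD : A.subtreeAt (p ++ [b]) = some (if b then tB else lB) := subtreeAt_child hB b
    have hl : (p ++ [b]) ++ q' = p ++ b :: q' := by simp
    by_cases hq' : q' = []
    · -- q = [b]
      subst hq'
      obtain ⟨hE', hstep⟩ := xp_child hP hB hC
      refine ⟨1, EOp_one, ?_⟩
      rw [mul_one]
      exact hstep
    · -- q' ≠ []
      have hsub : (if b then tB else lB).subtreeAt q' = some (PTree.node lC tC) := by
        have := subtreeAt_append A (p ++ [b]) q'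
        rw [hl, hC, hD] at this
        exact this.symm
      obtain ⟨l', t', hD'⟩ : ∃ l' t', (if b then tB else lB) = PTree.node l' t' := by
        rcases q' with _ | ⟨c, q''⟩
        · exact absurd rfl hq'
        · exact node_of_subtreeAt_cons hsub
      rw [hD'] at hD hsub
      have hE2 : A.IsEdge ((p ++ [b]) ++ q') := by rw [hl]; exact hE
      obtain ⟨M', hM', hrec⟩ := ih (p ++ [b]) hq' l' t' hD lC tC
        (by rw [hl]; exact hC) hE2
      obtain ⟨hE1, hstep⟩ := xp_child hP hB hD
      refine ⟨X (Sum.inr (Sum.inr ⟨p ++ [b], hE1⟩)) * M', EOp.mul (EOp_X _) hM', ?_⟩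
      have hidx : (⟨(p ++ [b]) ++ q', hE2⟩ : A.Edge) = ⟨p ++ b :: q', hE⟩ := Subtype.ext hl
      rw [hrec, hstep, hidx]
      ring

/-- Meet lemma: if `i` lies below `v` but not below `d(e₀)`, and `ρ` lies
below `d(e₀)` which is below `v`, then
`(x_{d(e₀)} ∘ Φ_A) · U = ((z_ρ − z_i) ∘ Φ_A) · N · ζ_{e₀}` with `U`, `N`
edge-only and `U` having nonzero constant term. -/
lemma meet (hP : A.PsiPhiId P) (e₀ : List Bool) (he₀ : A.IsEdge e₀)
    (lE tE : PTree r) (hE0 : A.subtreeAt e₀ = some (PTree.node lE tE))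
    (ρ i : Fin r) (hρmem : ρ ∈ (PTree.node lE tE).leafLabels)
    (hiE : i ∉ (PTree.node lE tE).leafLabels) :
    ∀ (q p : List Bool), q ≠ [] → e₀ = p ++ q →
      ∀ (lB tB : PTree r), A.subtreeAt p = some (PTree.node lB tB) →
        i ∈ (PTree.node lB tB).leafLabels →
      ∃ U N, EOp A U ∧ EOp A N ∧ constantCoeff U ≠ 0 ∧
        xp P (PTree.node lE tE) * U
          = (P ρ - P i) * N * X (Sum.inr (Sum.inr ⟨e₀, he₀⟩)) := by
  intro q
  induction q with
  | nil => intro p hq; exact absurd rfl hq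
  | cons b q' ih =>
    intro p _ hEq lB tB hB hiB
    have hD : A.subtreeAt (p ++ [b]) = some (if b then tB else lB) := subtreeAt_child hB b
    have hl : (p ++ [b]) ++ q' = p ++ b :: q' := by simp
    have hsub : (if b then tB else lB).subtreeAt q' = some (PTree.node lE tE) := by
      have := subtreeAt_append A (p ++ [b]) q'
      rw [hl, ← hEq, hE0, hD] at this
      exact this.symm
    by_cases hiD : i ∈ (if b then tB else lB).leafLabels
    · -- `i` on the same side as `e₀`
      have hq' : q' ≠ [] := by
        rintro rfl
        simp only [PTree.subtreeAt, Option.some.injEq] at hsub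
        rw [hsub] at hiD
        exact hiE hiD
      obtain ⟨l', t', hD'⟩ : ∃ l' t', (if b then tB else lB) = PTree.node l' t' := by
        rcases q' with _ | ⟨c, q''⟩
        · exact absurd rfl hq'
        · exact node_of_subtreeAt_cons hsub
      rw [hD'] at hD hiD
      exact ih (p ++ [b]) hq' (by rw [hl]; exact hEq) l' t' hD hiD
    · -- `i` and `ρ` on opposite sides of the vertex at `p`
      have hρD : ρ ∈ (if b then tB else lB).leafLabels :=
        mem_leafLabels_of_subtree hsub ρ hρmem
      -- get the two cofactors
      have hcof : ∃ Wρ Wi, EOp A Wρ ∧ EOp A Wi ∧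
          P ρ - P (PTree.node lB tB).rightmost = xp P (PTree.node lB tB) * Wρ ∧
          P i - P (PTree.node lB tB).rightmost = xp P (PTree.node lB tB) * Wi ∧
          constantCoeff (Wρ - Wi) ≠ 0 := by
        cases b with
        | true =>
          simp only [if_true] at hρD hiD
          have hiL : i ∈ lB.leafLabels := by
            rcases List.mem_append.mp hiB with h | h
            · exact h
            · exact absurd h hiD
          obtain ⟨Wρ, hWρ, hWρeq, hWρc⟩ := main1R hP hB hρD
          obtain ⟨Wi, hWi, hWieq, hWic⟩ := main1L hP hB hiL
          exact ⟨Wρ, Wi, hWρ, hWi, hWρeq, hWieq, by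
            rw [map_sub, hWρc, hWic]; norm_num⟩
        | false =>
          simp only [Bool.false_eq_true, if_false] at hρD hiD
          have hiT : i ∈ tB.leafLabels := by
            rcases List.mem_append.mp hiB with h | h
            · exact absurd h hiD
            · exact h
          obtain ⟨Wρ, hWρ, hWρeq, hWρc⟩ := main1L hP hB hρD
          obtain ⟨Wi, hWi, hWieq, hWic⟩ := main1R hP hB hiT
          exact ⟨Wρ, Wi, hWρ, hWi, hWρeq, hWieq, by
            rw [map_sub, hWρc, hWic]; norm_num⟩
      obtain ⟨Wρ, Wi, hWρ, hWi, hWρeq, hWieq, hU0⟩ := hcof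
      have hdiff : P ρ - P i = xp P (PTree.node lB tB) * (Wρ - Wi) := by
        have : P ρ - P i = (P ρ - P (PTree.node lB tB).rightmost)
            - (P i - P (PTree.node lB tB).rightmost) := by ring
        rw [this, hWρeq, hWieq]; ring
      have hE' : A.IsEdge (p ++ (b :: q')) := by rw [← hEq]; exact he₀
      obtain ⟨M, hM, hpath⟩ := path hP (b :: q') p (by simp) lB tB hB lE tE
        (by rw [← hEq]; exact hE0) hE'
      refine ⟨Wρ - Wi, M, hWρ.sub hWi, hM, hU0, ?_⟩
      have hidx : (⟨p ++ b :: q', hE'⟩ : A.Edge) = ⟨e₀, he₀⟩ := Subtype.ext hEq.symm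
      rw [hpath, hidx, hdiff]
      ring

end StmtAux
/-- Let `r ≥ 3`, `A ∈ 𝒯_r` and `e₀ ∈ E(A)`; let `ρ = R(d(e₀))` be the
rightmost leaf label in `Leaf(e₀)`, let `s ∈ Leaf(e₀)` with `s ≠ ρ`, and let
`i ∉ Leaf(e₀)`.  Let `Φ_A` (with components the polynomials `P i`) be the
polynomial map inverting `Ψ_A`.  Then there exists a formal power series `g`
in the variables `ζ_e (e ∈ E(A))` only, such that
`(z_s − z_ρ) ∘ Φ_A = ζ_{e₀} · g · ((z_ρ − z_i) ∘ Φ_A)` holds in the ring of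
formal power series in `(z_A, x_A, (ζ_e)_{e∈E(A)})`; that is, the expansion of
`(z_s − z_ρ)/(z_ρ − z_i)` in `A`-coordinates lies in
`ζ_{e₀}·ℂ[[ζ_e : e ∈ E(A)]]`. -/
theorem stmt_11 {r : ℕ} (hr : 3 ≤ r) (A : PTree r) (hA : A.IsTree)
    (e₀ : List Bool) (he₀ : A.IsEdge e₀)
    (ρ : Fin r) (hρ : A.rightmostAt e₀ = some ρ)
    (s : Fin r) (hs : s ∈ A.leavesAt e₀) (hsρ : s ≠ ρ)
    (i : Fin r) (hi : i ∉ A.leavesAt e₀)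
    (P : Fin r → MvPolynomial A.Idx ℂ)
    (hPhiPsi : A.PhiPsiId P) (hPsiPhi : A.PsiPhiId P) :
    ∃ g : MvPowerSeries A.Idx ℂ,
      (∀ m : A.Idx →₀ ℕ,
          (m (Sum.inl ()) ≠ 0 ∨ m (Sum.inr (Sum.inl ())) ≠ 0) →
            MvPowerSeries.coeff m g = 0) ∧
      ((P s - P ρ : MvPolynomial A.Idx ℂ) : MvPowerSeries A.Idx ℂ) =
        MvPowerSeries.X (Sum.inr (Sum.inr ⟨e₀, he₀⟩)) * g *
          ((P ρ - P i : MvPolynomial A.Idx ℂ) : MvPowerSeries A.Idx ℂ) := by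
  classical
  open StmtAux MvPolynomial in
  -- unpack the subtree at `e₀`
  obtain ⟨lE, tE, hE0⟩ := he₀.2
  -- `ρ` is the rightmost leaf below `d(e₀)`
  have hrm : (PTree.node lE tE).rightmost = ρ := by
    unfold PTree.rightmostAt at hρ
    rw [hE0] at hρ
    simpa using hρ
  -- membership data
  have hsE : s ∈ (PTree.node lE tE).leafLabels := by
    unfold PTree.leavesAt at hs
    rw [hE0] at hs
    simpa using hs
  have hiE : i ∉ (PTree.node lE tE).leafLabels := by
    unfold PTree.leavesAt at hi
    rw [hE0] at hi
    simpa using hi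
  have hρmem : ρ ∈ (PTree.node lE tE).leafLabels := by
    rw [← hrm]; exact rightmost_mem _
  -- the root of `A` is an internal vertex
  obtain ⟨lA, tA, hAn⟩ : ∃ l t, A = PTree.node l t := by
    rcases e₀ with _ | ⟨b, q⟩
    · exact absurd rfl he₀.1
    · exact node_of_subtreeAt_cons hE0
  have hA0 : A.subtreeAt [] = some (PTree.node lA tA) := by
    rw [hAn]
    rfl
  -- every label is a leaf label of `A`
  have hiA : i ∈ (PTree.node lA tA).leafLabels := by
    have hcard : A.leafLabels.toFinset = Finset.univ := by
      apply Finset.eq_univ_of_card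
      rw [List.toFinset_card_of_nodup hA.1, hA.2, Fintype.card_fin]
    have : i ∈ A.leafLabels := by
      rw [← List.mem_toFinset, hcard]; exact Finset.mem_univ i
    rw [← hAn]
    exact this
  -- the meet lemma at the root
  obtain ⟨U, N, hU, hN, hU0, hmeet⟩ := meet hPsiPhi e₀ he₀ lE tE hE0 ρ i hρmem hiE
    e₀ [] he₀.1 (by simp) lA tA hA0 hiA
  -- the main structural lemma at `d(e₀)`
  obtain ⟨W, hW, hWeq⟩ := main1 hPsiPhi (PTree.node lE tE) e₀ hE0 s hsE
  rw [hrm] at hWeq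
  -- pass to power series
  set R := MvPowerSeries A.Idx ℂ
  set u : ℂˣ := Units.mk0 (constantCoeff U) hU0 with hu
  have hcc : MvPowerSeries.constantCoeff (U : R) = (u : ℂ) := by
    rw [← MvPowerSeries.coeff_zero_eq_constantCoeff_apply, MvPolynomial.coeff_coe]
    simp [hu, MvPolynomial.constantCoeff_eq]
  set inv : R := MvPowerSeries.invOfUnit (U : R) u with hinvdef
  have hinv : (U : R) * inv = 1 := MvPowerSeries.mul_invOfUnit _ _ hcc
  refine ⟨(W : R) * (N : R) * inv, ?_, ?_⟩
  · exact fun m hm =>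
      (((EO_coe hW).mul (EO_coe hN)).mul (EO_invOfUnit hcc (EO_coe hU))) m hm
  · -- cast the polynomial identities
    have e1 : (xp P (PTree.node lE tE) : R) * (U : R)
        = ((P ρ : R) - (P i : R)) * (N : R)
            * MvPowerSeries.X (Sum.inr (Sum.inr ⟨e₀, he₀⟩)) := by
      have := congrArg (MvPolynomial.coeToMvPowerSeries.ringHom
        (σ := A.Idx) (R := ℂ)) hmeet
      simpa only [map_mul, map_sub, MvPolynomial.coeToMvPowerSeries.ringHom_apply,
        MvPolynomial.coe_X] using this
    have e3 : (P s : R) - (P ρ : R) = (xp P (PTree.node lE tE) : R) * (W : R) := by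
      have := congrArg (MvPolynomial.coeToMvPowerSeries.ringHom
        (σ := A.Idx) (R := ℂ)) hWeq
      simpa only [map_mul, map_sub, MvPolynomial.coeToMvPowerSeries.ringHom_apply] using this
    have hcast : ((P s - P ρ : MvPolynomial A.Idx ℂ) : R) = (P s : R) - (P ρ : R) := by
      rw [← MvPolynomial.coeToMvPowerSeries.ringHom_apply, map_sub]
      rfl
    have hcast2 : ((P ρ - P i : MvPolynomial A.Idx ℂ) : R) = (P ρ : R) - (P i : R) := by
      rw [← MvPolynomial.coeToMvPowerSeries.ringHom_apply, map_sub]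
      rfl
    rw [hcast, hcast2, e3]
    linear_combination ((W : R) * inv) * e1
      - ((xp P (PTree.node lE tE) : R) * (W : R)) * hinv
end
end
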